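/- Let E be finite and Q = Σ_k λ_k P_{[v_k]} a spectral decomposition of a symmetric positive contraction Q on ℓ²(E), where the v_k are orthonormal and λ_k ∈ [0,1]. Let I_k be independent Bernoulli(λ_k) random variables and let 𝐇 := span{v_k : I_k = 1}. Then for every A ⊆ E, det(Q↾A) = E[det((P_𝐇)↾A)], where P_𝐇 is the orthogonal projection onto the random subspace 𝐇. -/

import Mathlib

open Finset

/-- The "probability" that a random set `S` (Bernoulli product measure) contains `T`
is `∏_{k∈T} λ_k`. -/
private lemma aux_prob {m : ℕ} (lam : Fin m → ℝ) (T : Finset (Fin m)) :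
    (∑ S : Finset (Fin m), ((∏ k ∈ S, lam k) * ∏ k ∈ Sᶜ, (1 - lam k)) *
      (if T ⊆ S then (1:ℝ) else 0)) = ∏ k ∈ T, lam k := by
  have h := Finset.prod_add (fun k => lam k)
    (fun k => if k ∈ T then (0:ℝ) else 1 - lam k) (Finset.univ : Finset (Fin m))
  rw [Finset.powerset_univ] at h
  have key : ∀ S : Finset (Fin m), (∏ k ∈ Sᶜ, (if k ∈ T then (0:ℝ) else 1 - lam k))
      = (if T ⊆ S then (1:ℝ) else 0) * ∏ k ∈ Sᶜ, (1 - lam k) := by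
    intro S
    by_cases hTS : T ⊆ S
    · rw [if_pos hTS, one_mul]
      refine Finset.prod_congr rfl fun k hk => ?_
      exact if_neg fun hkT => (Finset.mem_compl.mp hk) (hTS hkT)
    · rw [if_neg hTS, zero_mul]
      obtain ⟨k, hkT, hkS⟩ := Finset.not_subset.mp hTS
      exact Finset.prod_eq_zero (Finset.mem_compl.mpr hkS) (if_pos hkT)
  have hl : (∏ k, (lam k + if k ∈ T then (0:ℝ) else 1 - lam k)) = ∏ k ∈ T, lam k := by
    have h1 : ∀ k, lam k + (if k ∈ T then (0:ℝ) else 1 - lam k)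
        = if k ∈ T then lam k else 1 := by
      intro k; by_cases hk : k ∈ T <;> simp [hk]
    simp_rw [h1]
    exact Finset.prod_ite_mem Finset.univ T lam ▸ by rw [Finset.univ_inter]
  calc (∑ S : Finset (Fin m), ((∏ k ∈ S, lam k) * ∏ k ∈ Sᶜ, (1 - lam k)) *
        (if T ⊆ S then (1:ℝ) else 0))
      = ∑ S : Finset (Fin m), (∏ k ∈ S, lam k) *
          ∏ k ∈ Finset.univ \ S, (if k ∈ T then (0:ℝ) else 1 - lam k) := by
        refine Finset.sum_congr rfl fun S _ => ?_
        rw [← Finset.compl_eq_univ_sdiff, key S]; ring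
    _ = ∏ k, (lam k + if k ∈ T then (0:ℝ) else 1 - lam k) := h.symm
    _ = ∏ k ∈ T, lam k := hl

/-- Matrix entries of the orthogonal projection onto the span of an orthonormal subfamily. -/
private lemma proj_entry {E : Type*} [Fintype E] [DecidableEq E] {m : ℕ}
    (v : Fin m → EuclideanSpace ℝ E) (hv : Orthonormal ℝ v) (S : Finset (Fin m)) (e f : E) :
    (inner ℝ (EuclideanSpace.single f (1:ℝ))
      ((Submodule.orthogonalProjectionOnto (Submodule.span ℝ (v '' ↑S))
        (EuclideanSpace.single e (1:ℝ)) : EuclideanSpace ℝ E)) : ℝ)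
    = ∑ k ∈ S, v k e * v k f := by
  have hproj : ((Submodule.orthogonalProjectionOnto (Submodule.span ℝ (v '' ↑S))
      (EuclideanSpace.single e (1:ℝ)) : EuclideanSpace ℝ E))
      = ∑ k ∈ S, (v k e) • v k := by
    rw [Submodule.coe_orthogonalProjectionOnto_apply]
    apply Submodule.eq_starProjection_of_mem_of_inner_eq_zero
    · exact Submodule.sum_mem _ fun k hk => Submodule.smul_mem _ _
        (Submodule.subset_span ⟨k, by simpa using hk, rfl⟩)
    · intro w hw
      induction hw using Submodule.span_induction with
      | mem x hx =>
        obtain ⟨j, hj, rfl⟩ := hx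
        rw [real_inner_comm, inner_sub_right, sub_eq_zero, inner_sum]
        rw [EuclideanSpace.inner_single_right]
        simp only [real_inner_smul_right]
        rw [Finset.sum_eq_single j
          (fun k hk hkj => by
            rw [hv.2 (Ne.symm hkj), mul_zero])
          (fun hj' => absurd (by simpa using hj) hj')]
        have h1 : (inner ℝ (v j) (v j) : ℝ) = 1 := by
          rw [real_inner_self_eq_norm_sq, hv.1 j, one_pow]
        rw [h1]; simp
      | zero => simp
      | add x y hx hy ihx ihy => rw [inner_add_right, ihx, ihy, add_zero]
      | smul c x hx ih => rw [inner_smul_right, ih, mul_zero]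
  rw [hproj, inner_sum]
  refine Finset.sum_congr rfl fun k _ => ?_
  rw [real_inner_smul_right, EuclideanSpace.inner_single_left]
  simp [mul_comm]

/-- Leibniz-type expansion for determinants of restricted mixtures of rank-one matrices. -/
private lemma det_form {E : Type*} [Fintype E] [DecidableEq E] {m : ℕ}
    (v : Fin m → EuclideanSpace ℝ E) (w : Fin m → ℝ) (A : Finset E) :
    ((Matrix.of fun e f : E => ∑ k, w k * v k e * v k f).submatrix
        (fun a : A => (a : E)) (fun a : A => (a : E))).det
    = ∑ t : A → Fin m, (∏ a : A, w (t a)) * ((∏ a : A, v (t a) (a : E)) *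
        ∑ σ : Equiv.Perm A, ((Equiv.Perm.sign σ : ℤ) : ℝ) *
          ∏ a : A, v (t a) ((σ a : A) : E)) := by
  rw [Matrix.det_apply']
  simp only [Matrix.submatrix_apply, Matrix.of_apply]
  calc (∑ σ : Equiv.Perm A, ((Equiv.Perm.sign σ : ℤ) : ℝ) *
          ∏ a : A, ∑ k, w k * v k ((σ a : A) : E) * v k (a : E))
      = ∑ σ : Equiv.Perm A, ∑ t : A → Fin m, ((Equiv.Perm.sign σ : ℤ) : ℝ) *
          ∏ a : A, (w (t a) * v (t a) ((σ a : A) : E) * v (t a) (a : E)) := by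
        refine Finset.sum_congr rfl fun σ _ => ?_
        rw [Finset.prod_univ_sum, Fintype.piFinset_univ, Finset.mul_sum]
    _ = ∑ t : A → Fin m, ∑ σ : Equiv.Perm A, ((Equiv.Perm.sign σ : ℤ) : ℝ) *
          ∏ a : A, (w (t a) * v (t a) ((σ a : A) : E) * v (t a) (a : E)) :=
        Finset.sum_comm
    _ = _ := by
        refine Finset.sum_congr rfl fun t _ => ?_
        rw [Finset.mul_sum, Finset.mul_sum]
        refine Finset.sum_congr rfl fun σ _ => ?_
        simp_rw [Finset.prod_mul_distrib]
        ring

theorem stmt15 {E : Type*} [Fintype E] [DecidableEq E]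
    {m : ℕ} (lam : Fin m → ℝ) (hlam : ∀ k, lam k ∈ Set.Icc (0:ℝ) 1)
    (v : Fin m → EuclideanSpace ℝ E) (hv : Orthonormal ℝ v)
    (Q : Matrix E E ℝ)
    (hQ : Q = Matrix.of fun e f => ∑ k, lam k * v k e * v k f)
    (A : Finset E) :
    (Q.submatrix (fun a : A => (a : E)) (fun a : A => (a : E))).det
      = ∑ S : Finset (Fin m),
          ((∏ k ∈ S, lam k) * ∏ k ∈ Sᶜ, (1 - lam k)) *
          ((Matrix.of fun e f : E =>
              (inner ℝ (EuclideanSpace.single f (1:ℝ))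
                ((Submodule.orthogonalProjectionOnto (Submodule.span ℝ (v '' ↑S))
                    (EuclideanSpace.single e (1:ℝ)) : EuclideanSpace ℝ E)) : ℝ)).submatrix
            (fun a : A => (a : E)) (fun a : A => (a : E))).det := by
  subst hQ
  have hmat : ∀ S : Finset (Fin m),
      (Matrix.of fun e f : E =>
          (inner ℝ (EuclideanSpace.single f (1:ℝ))
            ((Submodule.orthogonalProjectionOnto (Submodule.span ℝ (v '' ↑S))
                (EuclideanSpace.single e (1:ℝ)) : EuclideanSpace ℝ E)) : ℝ))
      = Matrix.of fun e f : E => ∑ k, (if k ∈ S then (1:ℝ) else 0) * v k e * v k f := by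
    intro S
    ext e f
    rw [Matrix.of_apply, Matrix.of_apply, proj_entry v hv S e f]
    simp [ite_mul]
  simp_rw [hmat]
  rw [det_form v lam A]
  simp_rw [det_form v _ A]
  -- abbreviations
  set D : (A → Fin m) → ℝ := fun t => (∏ a : A, v (t a) (a : E)) *
      ∑ σ : Equiv.Perm A, ((Equiv.Perm.sign σ : ℤ) : ℝ) *
        ∏ a : A, v (t a) ((σ a : A) : E) with hD
  have hprodite : ∀ (S : Finset (Fin m)) (t : A → Fin m),
      (∏ a : A, (if t a ∈ S then (1:ℝ) else 0))
      = if Finset.image t Finset.univ ⊆ S then (1:ℝ) else 0 := by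
    intro S t
    by_cases h : Finset.image t Finset.univ ⊆ S
    · rw [if_pos h]
      exact Finset.prod_eq_one fun a _ =>
        if_pos (h (Finset.mem_image_of_mem t (Finset.mem_univ a)))
    · rw [if_neg h]
      obtain ⟨k, hk, hkS⟩ := Finset.not_subset.mp h
      obtain ⟨a, _, rfl⟩ := Finset.mem_image.mp hk
      exact Finset.prod_eq_zero (Finset.mem_univ a) (if_neg hkS)
  calc (∑ t : A → Fin m, (∏ a : A, lam (t a)) * D t)
      = ∑ t : A → Fin m,
          (∑ S : Finset (Fin m), ((∏ k ∈ S, lam k) * ∏ k ∈ Sᶜ, (1 - lam k)) *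
            ∏ a : A, (if t a ∈ S then (1:ℝ) else 0)) * D t := by
        refine Finset.sum_congr rfl fun t _ => ?_
        by_cases hinj : Function.Injective t
        · congr 1
          simp_rw [hprodite]
          rw [aux_prob lam (Finset.image t Finset.univ),
            Finset.prod_image fun x _ y _ h => hinj h]
        · -- the alternating sum vanishes for non-injective `t`
          obtain ⟨a, b, hab, hne⟩ : ∃ a b, t a = t b ∧ a ≠ b := by
            simp only [Function.Injective, not_forall] at hinj
            obtain ⟨a, b, h1, h2⟩ := hinj
            exact ⟨a, b, h1, h2⟩
          have hz : (∑ σ : Equiv.Perm A, ((Equiv.Perm.sign σ : ℤ) : ℝ) *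
              ∏ a : A, v (t a) ((σ a : A) : E)) = 0 := by
            have := Matrix.det_zero_of_column_eq (M := Matrix.of fun i j : A =>
              v (t j) ((i : A) : E)) hne (fun k => by simp [hab])
            rw [Matrix.det_apply'] at this
            simpa using this
          rw [hD]
          simp only [hz, mul_zero]
    _ = ∑ t : A → Fin m, ∑ S : Finset (Fin m),
          (((∏ k ∈ S, lam k) * ∏ k ∈ Sᶜ, (1 - lam k)) *
            (∏ a : A, (if t a ∈ S then (1:ℝ) else 0))) * D t := by
        simp_rw [Finset.sum_mul]
    _ = ∑ S : Finset (Fin m), ∑ t : A → Fin m,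
          (((∏ k ∈ S, lam k) * ∏ k ∈ Sᶜ, (1 - lam k)) *
            (∏ a : A, (if t a ∈ S then (1:ℝ) else 0))) * D t :=
        Finset.sum_comm
    _ = ∑ S : Finset (Fin m),
          ((∏ k ∈ S, lam k) * ∏ k ∈ Sᶜ, (1 - lam k)) *
          ∑ t : A → Fin m, (∏ a : A, (if t a ∈ S then (1:ℝ) else 0)) * D t := by
        refine Finset.sum_congr rfl fun S _ => ?_
        rw [Finset.mul_sum]
        refine Finset.sum_congr rfl fun t _ => ?_
        ring
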